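/- Let α ≥ 1 be a real number, β = 2α, and let n_0 ≥ 2. Define sequences n_{i+1} = n_i^β and T_0 = 2^(α·n_0), T_{i+1} = T_i^α. Then for all i ≥ 0, T_i ≤ 2^(α^i·α·n_0) and n_i = n_0^((2α)^i), and hence log(T_i)/log(n_i) ≤ α·n_0/(2^i · log n_0). In particular, if t ≥ log_2(α·n_0/log_2 n_0), then T_t ≤ n_t. -/
import Mathlib


/-- Quantitative analysis of the bootstrapping recursion: with `n_{i+1} = n_i^(2α)`,
`T_0 = 2^(α n_0)` and `T_{i+1} = T_i^α` (for a real `α ≥ 1` and `n_0 ≥ 2`), one has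
`T_i ≤ 2^(α^i·α·n_0)` and `n_i = n_0^((2α)^i)`, hence
`log T_i / log n_i ≤ α·n_0/(2^i log n_0)`; in particular `T_t ≤ n_t` once
`t ≥ log₂(α·n_0/log₂ n_0)`. -/
theorem stmt16 (a : ℝ) (ha : 1 ≤ a) (n T : ℕ → ℝ) (hn0 : 2 ≤ n 0)
    (hn : ∀ i, n (i + 1) = n i ^ (2 * a))
    (hT0 : T 0 = 2 ^ (a * n 0))
    (hT : ∀ i, T (i + 1) = T i ^ a) :
    (∀ i : ℕ, T i ≤ 2 ^ (a ^ i * a * n 0)) ∧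
    (∀ i : ℕ, n i = n 0 ^ ((2 * a) ^ i)) ∧
    (∀ i : ℕ, Real.logb 2 (T i) / Real.logb 2 (n i)
        ≤ a * n 0 / (2 ^ i * Real.logb 2 (n 0))) ∧
    (∀ t : ℕ, Real.logb 2 (a * n 0 / Real.logb 2 (n 0)) ≤ (t : ℝ) → T t ≤ n t) := by
  have ha0 : (0:ℝ) < a := lt_of_lt_of_le one_pos ha
  have hn0pos : (0:ℝ) < n 0 := lt_of_lt_of_le two_pos hn0
  have hL : 0 < Real.logb 2 (n 0) := Real.logb_pos one_lt_two (by linarith)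
  have hTeq : ∀ i, T i = 2 ^ (a ^ i * a * n 0) := by
    intro i
    induction i with
    | zero => simpa using hT0
    | succ i ih =>
      rw [hT i, ih, ← Real.rpow_mul (by norm_num : (0:ℝ) ≤ 2)]
      congr 1
      ring
  have hneq : ∀ i, n i = n 0 ^ ((2 * a) ^ i) := by
    intro i
    induction i with
    | zero => simp
    | succ i ih =>
      rw [hn i, ih, ← Real.rpow_mul hn0pos.le, pow_succ]
  have hlogT : ∀ i, Real.logb 2 (T i) = a ^ i * a * n 0 := by
    intro i
    rw [hTeq i, Real.logb_rpow two_pos (by norm_num)]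
  have hlogn : ∀ i, Real.logb 2 (n i) = (2 * a) ^ i * Real.logb 2 (n 0) := by
    intro i
    rw [hneq i, Real.logb_rpow_eq_mul_logb_of_pos hn0pos]
  refine ⟨fun i => le_of_eq (hTeq i), hneq, fun i => ?_, fun t ht => ?_⟩
  · rw [hlogT i, hlogn i, mul_pow]
    rw [show a ^ i * a * n 0 = a ^ i * (a * n 0) by ring,
      show (2:ℝ) ^ i * a ^ i * Real.logb 2 (n 0)
        = a ^ i * ((2:ℝ) ^ i * Real.logb 2 (n 0)) by ring,
      mul_div_mul_left _ _ (pow_ne_zero i ha0.ne')]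
  · have hx : a * n 0 / Real.logb 2 (n 0) ≤ 2 ^ (t : ℝ) := by
      rw [← Real.logb_le_iff_le_rpow one_lt_two
        (div_pos (mul_pos ha0 hn0pos) hL)]
      exact ht
    have hx' : a * n 0 ≤ 2 ^ (t : ℝ) * Real.logb 2 (n 0) :=
      (div_le_iff₀ hL).mp hx
    have hexp : a ^ t * a * n 0 ≤ (2 * a) ^ t * Real.logb 2 (n 0) := by
      have h1 : a ^ t * (a * n 0) ≤ a ^ t * (2 ^ (t : ℝ) * Real.logb 2 (n 0)) :=
        mul_le_mul_of_nonneg_left hx' (le_of_lt (pow_pos ha0 t))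
      calc a ^ t * a * n 0 = a ^ t * (a * n 0) := by ring
        _ ≤ a ^ t * (2 ^ (t : ℝ) * Real.logb 2 (n 0)) := h1
        _ = (2 * a) ^ t * Real.logb 2 (n 0) := by
            rw [mul_pow, ← Real.rpow_natCast 2 t]; ring
    have hn0eq : n 0 = 2 ^ Real.logb 2 (n 0) :=
      (Real.rpow_logb two_pos (by norm_num) hn0pos).symm
    calc T t = 2 ^ (a ^ t * a * n 0) := hTeq t
      _ ≤ 2 ^ ((2 * a) ^ t * Real.logb 2 (n 0)) :=
          Real.rpow_le_rpow_of_exponent_le one_le_two hexp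
      _ = n 0 ^ ((2 * a) ^ t) := by
          rw [mul_comm, Real.rpow_mul (by norm_num : (0:ℝ) ≤ 2),
            Real.rpow_logb two_pos (by norm_num) hn0pos]
      _ = n t := (hneq t).symm
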